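/- For a > 0, λ > 0, and a nonnegative integer n, the quantity (1/n!)[γ(n+1, a)/a + γ(n+1, a(λ+1))(nλ - 1)/(a(λ+1)^{n+2}) + nλ Γ(n, a(λ+1))/(λ+1)^{n+1}] equals ∫₀^∞ (x^n/n!) e^{-x} p(x) dx, where p is the Max-U-Exp(a, λ) density; in particular these quantities are nonnegative and sum over n to 1 (i.e., the Mixed Poisson-Max-U-Exp(a, λ) law is a probability distribution on the nonnegative integers). -/

import Mathlib

open MeasureTheory Set

/-- The Max-U-Exp(a, λ) probability density function. -/
noncomputable def maxUExpPDF (a lam x : ℝ) : ℝ :=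
  if x ≤ 0 then 0
  else if x ≤ a then (1 / a) * (1 - Real.exp (-lam * x) + lam * x * Real.exp (-lam * x))
  else lam * Real.exp (-lam * x)

/-- The lower incomplete Gamma function γ(s, x) = ∫₀^x t^(s-1) e^{-t} dt. -/
noncomputable def lowerIncGamma (s x : ℝ) : ℝ :=
  ∫ t in Set.Ioc (0 : ℝ) x, t ^ (s - 1) * Real.exp (-t)

/-- The upper incomplete Gamma function Γ(s, x) = ∫_x^∞ t^(s-1) e^{-t} dt. -/
noncomputable def upperIncGamma (s x : ℝ) : ℝ :=
  ∫ t in Set.Ioi x, t ^ (s - 1) * Real.exp (-t)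

/-- The Mixed Poisson-Max-U-Exp(a, λ) probability mass function. -/
noncomputable def mixedPoissonMaxUExpPMF (a lam : ℝ) (n : ℕ) : ℝ :=
  (1 / (n.factorial : ℝ)) *
    (lowerIncGamma ((n : ℝ) + 1) a / a
      + lowerIncGamma ((n : ℝ) + 1) (a * (lam + 1)) * ((n : ℝ) * lam - 1) /
          (a * (lam + 1) ^ (n + 2))
      + (n : ℝ) * lam * upperIncGamma (n : ℝ) (a * (lam + 1)) / (lam + 1) ^ (n + 1))

noncomputable def Glow (n : ℕ) (c : ℝ) : ℝ := ∫ x in Set.Ioc (0:ℝ) c, x ^ n * Real.exp (-x)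

lemma contPow (n : ℕ) (μ : ℝ) : Continuous fun x : ℝ => x ^ n * Real.exp (-(μ * x)) := by
  fun_prop

lemma intOn_Ioc (n : ℕ) (μ c : ℝ) :
    IntegrableOn (fun x : ℝ => x ^ n * Real.exp (-(μ * x))) (Ioc 0 c) :=
  (contPow n μ).integrableOn_Ioc

lemma intOn_Ioi_one (n : ℕ) : IntegrableOn (fun x : ℝ => x ^ n * Real.exp (-x)) (Ioi 0) := by
  have h := Real.GammaIntegral_convergent (s := (n : ℝ) + 1) (by positivity)
  apply h.congr_fun ?_ measurableSet_Ioi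
  intro x hx
  simp [Real.rpow_natCast, mul_comm]

lemma glow_eq_int (n : ℕ) : Glow n = fun c => ∫ x in Set.Ioc (0:ℝ) c, x ^ n * Real.exp (-x) := rfl

lemma int_Ioi_one (n : ℕ) : ∫ x in Ioi (0:ℝ), x ^ n * Real.exp (-x) = n.factorial := by
  have h := Real.Gamma_eq_integral (s := (n : ℝ) + 1) (by positivity)
  rw [show ((n:ℝ)+1) = ((n+1 : ℕ) : ℝ) by push_cast; ring] at h
  push_cast at h
  rw [Real.Gamma_nat_eq_factorial (n := n)] at h
  rw [h]
  apply setIntegral_congr_fun measurableSet_Ioi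
  intro x hx
  push_cast
  rw [add_sub_cancel_right, Real.rpow_natCast, mul_comm]

lemma glow_eq_interval (n : ℕ) {c : ℝ} (hc : 0 ≤ c) :
    Glow n c = ∫ x in (0:ℝ)..c, x ^ n * Real.exp (-x) :=
  (intervalIntegral.integral_of_le hc).symm

lemma glow_zero {c : ℝ} (hc : 0 ≤ c) : Glow 0 c = 1 - Real.exp (-c) := by
  rw [glow_eq_interval 0 hc]
  simp only [pow_zero, one_mul]
  have key : ∀ x ∈ uIcc (0:ℝ) c, HasDerivAt (fun y => -Real.exp (-y)) (Real.exp (-x)) x := by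
    intro x _
    have h2 : HasDerivAt (fun y : ℝ => Real.exp (-y)) (-Real.exp (-x)) x := by
      exact ((Real.hasDerivAt_exp (-x)).comp x (hasDerivAt_neg x)).congr_deriv (by ring)
    exact h2.neg.congr_deriv (by ring)
  rw [intervalIntegral.integral_eq_sub_of_hasDerivAt key
    ((Real.continuous_exp.comp continuous_neg).intervalIntegrable 0 c)]
  simp
  ring

lemma glow_succ (n : ℕ) {c : ℝ} (hc : 0 ≤ c) :
    Glow (n+1) c = ((n:ℝ)+1) * Glow n c - c ^ (n+1) * Real.exp (-c) := by
  have key : ∀ x ∈ uIcc (0:ℝ) c,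
      HasDerivAt (fun y => -(y ^ (n+1) * Real.exp (-y)))
        (x ^ (n+1) * Real.exp (-x) - ((n:ℝ)+1) * (x ^ n * Real.exp (-x))) x := by
    intro x _
    have h1 : HasDerivAt (fun y : ℝ => y ^ (n+1)) (((n:ℝ)+1) * x ^ n) x := by
      simpa using hasDerivAt_pow (n+1) x
    have h2 : HasDerivAt (fun y : ℝ => Real.exp (-y)) (-Real.exp (-x)) x := by
      exact ((Real.hasDerivAt_exp (-x)).comp x (hasDerivAt_neg x)).congr_deriv (by ring)
    have h3 := (h1.mul h2).neg
    exact h3.congr_deriv (by ring)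
  have hcont : Continuous fun x : ℝ =>
      x ^ (n+1) * Real.exp (-x) - ((n:ℝ)+1) * (x ^ n * Real.exp (-x)) := by fun_prop
  have h := intervalIntegral.integral_eq_sub_of_hasDerivAt key (hcont.intervalIntegrable 0 c)
  rw [intervalIntegral.integral_sub (by apply Continuous.intervalIntegrable; fun_prop)
    (by apply Continuous.intervalIntegrable; fun_prop),
    intervalIntegral.integral_const_mul] at h
  rw [glow_eq_interval (n+1) hc, glow_eq_interval n hc]
  simp only [neg_zero, Real.exp_zero, zero_pow (Nat.succ_ne_zero n), zero_mul, mul_one, neg_neg,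
    sub_zero] at h
  linarith

lemma scale_Ioc (n : ℕ) {μ c : ℝ} (hμ : 0 < μ) (hc : 0 ≤ c) :
    ∫ x in Ioc (0:ℝ) c, x ^ n * Real.exp (-(μ * x)) = (μ ^ (n+1))⁻¹ * Glow n (μ * c) := by
  rw [← intervalIntegral.integral_of_le hc, glow_eq_interval n (by positivity)]
  have h := intervalIntegral.integral_comp_mul_left (a := (0:ℝ)) (b := c)
    (f := fun y => y ^ n * Real.exp (-y)) (c := μ) hμ.ne'
  rw [mul_zero, smul_eq_mul] at h
  have h' : ∫ x in (0:ℝ)..c, (μ*x) ^ n * Real.exp (-(μ*x))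
      = μ^n * ∫ x in (0:ℝ)..c, x ^ n * Real.exp (-(μ*x)) := by
    rw [← intervalIntegral.integral_const_mul]
    congr 1; ext x; rw [mul_pow]; ring
  rw [h'] at h
  rw [inv_mul_eq_div, eq_div_iff hμ.ne'] at h
  have hne : (μ^(n+1) : ℝ) ≠ 0 := by positivity
  field_simp
  linear_combination h

lemma intOn_Ioc1 (n : ℕ) (c : ℝ) :
    IntegrableOn (fun x : ℝ => x ^ n * Real.exp (-x)) (Ioc 0 c) := by
  apply Continuous.integrableOn_Ioc; fun_prop

lemma upper_one (n : ℕ) {c : ℝ} (hc : 0 ≤ c) :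
    ∫ x in Ioi c, x ^ n * Real.exp (-x) = (n.factorial : ℝ) - Glow n c := by
  have hsplit : Ioc (0:ℝ) c ∪ Ioi c = Ioi 0 := Ioc_union_Ioi_eq_Ioi hc
  have h := int_Ioi_one n
  rw [← hsplit, setIntegral_union (Ioc_disjoint_Ioi le_rfl) measurableSet_Ioi
    (intOn_Ioc1 n c) ((intOn_Ioi_one n).mono_set (Ioi_subset_Ioi hc))] at h
  unfold Glow
  linarith

lemma intOn_Ioi' (n : ℕ) {μ c : ℝ} (hμ : 0 < μ) (hc : 0 ≤ c) :
    IntegrableOn (fun x : ℝ => x ^ n * Real.exp (-(μ * x))) (Ioi c) := by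
  have h1 : IntegrableOn (fun x : ℝ => (μ*x) ^ n * Real.exp (-(μ*x))) (Ioi c) := by
    apply (integrableOn_Ioi_comp_mul_left_iff (fun y : ℝ => y ^ n * Real.exp (-y)) c hμ).mpr
    exact (intOn_Ioi_one n).mono_set (Ioi_subset_Ioi (by positivity))
  have h2 : IntegrableOn (fun x : ℝ => (μ ^ n)⁻¹ * ((μ*x) ^ n * Real.exp (-(μ*x)))) (Ioi c) :=
    h1.const_mul ((μ ^ n)⁻¹)
  apply IntegrableOn.congr_fun h2 ?_ measurableSet_Ioi
  intro x _
  simp only [mul_pow]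
  field_simp

lemma scale_Ioi (n : ℕ) {μ c : ℝ} (hμ : 0 < μ) (hc : 0 ≤ c) :
    ∫ x in Ioi c, x ^ n * Real.exp (-(μ * x))
      = (μ ^ (n+1))⁻¹ * ((n.factorial : ℝ) - Glow n (μ * c)) := by
  have h := MeasureTheory.integral_comp_mul_left_Ioi
    (fun y : ℝ => y ^ n * Real.exp (-y)) c hμ
  simp only [smul_eq_mul] at h
  rw [upper_one n (by positivity)] at h
  have h' : ∫ x in Ioi c, (μ*x) ^ n * Real.exp (-(μ*x))
      = μ^n * ∫ x in Ioi c, x ^ n * Real.exp (-(μ*x)) := by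
    rw [← integral_const_mul]
    congr 1; ext x; rw [mul_pow]; ring
  rw [h'] at h
  have hne : (μ^(n+1) : ℝ) ≠ 0 := by positivity
  field_simp at h ⊢
  linear_combination h

lemma lowerIncGamma_eq (n : ℕ) (c : ℝ) : lowerIncGamma ((n:ℝ)+1) c = Glow n c := by
  unfold lowerIncGamma Glow
  apply setIntegral_congr_fun measurableSet_Ioc
  intro x hx
  simp only [add_sub_cancel_right, Real.rpow_natCast]

lemma upperIncGamma_eq (n : ℕ) {c : ℝ} (hc : 0 ≤ c) :
    upperIncGamma ((n:ℝ)+1) c = (n.factorial : ℝ) - Glow n c := by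
  unfold upperIncGamma
  rw [← upper_one n hc]
  apply setIntegral_congr_fun measurableSet_Ioi
  intro x hx
  simp only [add_sub_cancel_right, Real.rpow_natCast]

lemma nmul_upper (n : ℕ) {b : ℝ} (hb : 0 < b) :
    (n:ℝ) * upperIncGamma (n:ℝ) b
      = (n.factorial : ℝ) - Glow n b - b ^ n * Real.exp (-b) := by
  cases n with
  | zero => simp [glow_zero hb.le]
  | succ m =>
    have h : upperIncGamma ((m+1 : ℕ) : ℝ) b = (m.factorial : ℝ) - Glow m b := by
      rw [show (((m+1 : ℕ)) : ℝ) = (m:ℝ)+1 by push_cast; ring]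
      exact upperIncGamma_eq m hb.le
    rw [h, glow_succ m hb.le]
    push_cast [Nat.factorial_succ]
    ring

lemma pdf_mid {a lam x : ℝ} (hx : x ∈ Ioc (0:ℝ) a) :
    maxUExpPDF a lam x = (1/a) * (1 - Real.exp (-lam*x) + lam*x*Real.exp (-lam*x)) := by
  unfold maxUExpPDF
  rw [if_neg (not_le.mpr hx.1), if_pos hx.2]

lemma pdf_right {a lam x : ℝ} (ha : 0 < a) (hx : x ∈ Ioi a) :
    maxUExpPDF a lam x = lam * Real.exp (-lam*x) := by
  unfold maxUExpPDF
  rw [if_neg (not_le.mpr (ha.trans hx)), if_neg (not_le.mpr hx)]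

lemma pdf_nonneg {a lam : ℝ} (ha : 0 < a) (hlam : 0 < lam) (x : ℝ) :
    0 ≤ maxUExpPDF a lam x := by
  unfold maxUExpPDF
  split_ifs with h1 h2
  · exact le_refl 0
  · have hx : 0 < x := not_le.mp h1
    have he : Real.exp (-lam*x) ≤ 1 := by
      rw [Real.exp_le_one_iff]; nlinarith
    have hp : 0 ≤ lam * x * Real.exp (-lam*x) := by positivity
    have h0 : 0 ≤ 1/a := by positivity
    nlinarith
  · positivity

lemma pdf_meas (a lam : ℝ) : Measurable (maxUExpPDF a lam) := by
  unfold maxUExpPDF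
  refine Measurable.ite (measurableSet_le measurable_id measurable_const) measurable_const ?_
  refine Measurable.ite (measurableSet_le measurable_id measurable_const) ?_ ?_ <;> fun_prop

section main
variable {a lam : ℝ}

lemma eqOn_mid (n : ℕ) : ∀ x ∈ Ioc (0:ℝ) a,
    x^n * Real.exp (-x) * maxUExpPDF a lam x
      = (1/a) * (x^n * Real.exp (-x) - x^n * Real.exp (-((lam+1)*x))
          + lam * (x^(n+1) * Real.exp (-((lam+1)*x)))) := by
  intro x hx
  rw [pdf_mid hx]
  have he : Real.exp (-((lam+1)*x)) = Real.exp (-x) * Real.exp (-lam*x) := by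
    rw [← Real.exp_add]; ring_nf
  rw [he]; ring

lemma intOn_g_mid (n : ℕ) :
    IntegrableOn (fun x => x^n * Real.exp (-x) * maxUExpPDF a lam x) (Ioc 0 a) := by
  have hcont : Continuous (fun x : ℝ => (1/a) * (x^n * Real.exp (-x)
      - x^n * Real.exp (-((lam+1)*x)) + lam * (x^(n+1) * Real.exp (-((lam+1)*x))))) := by
    fun_prop
  exact (hcont.integrableOn_Ioc).congr_fun (fun x hx => (eqOn_mid n x hx).symm)
    measurableSet_Ioc

lemma eqOn_right (n : ℕ) (ha : 0 < a) : ∀ x ∈ Ioi a,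
    x^n * Real.exp (-x) * maxUExpPDF a lam x
      = lam * (x^n * Real.exp (-((lam+1)*x))) := by
  intro x hx
  rw [pdf_right ha hx]
  have he : Real.exp (-((lam+1)*x)) = Real.exp (-x) * Real.exp (-lam*x) := by
    rw [← Real.exp_add]; ring_nf
  rw [he]; ring

lemma intOn_g_right (n : ℕ) (ha : 0 < a) (hlam : 0 < lam) :
    IntegrableOn (fun x => x^n * Real.exp (-x) * maxUExpPDF a lam x) (Ioi a) := by
  have hL : (0:ℝ) < lam + 1 := by linarith
  have h := (intOn_Ioi' n hL ha.le).const_mul lam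
  exact (IntegrableOn.congr_fun h (fun x hx => (eqOn_right n ha x hx).symm) measurableSet_Ioi)

lemma int_mid (n : ℕ) (ha : 0 < a) (hlam : 0 < lam) :
    ∫ x in Ioc (0:ℝ) a, x^n * Real.exp (-x) * maxUExpPDF a lam x
      = (1/a) * (Glow n a - (((lam+1)^(n+1))⁻¹) * Glow n ((lam+1)*a)
          + lam * ((((lam+1)^(n+2))⁻¹) * Glow (n+1) ((lam+1)*a))) := by
  have hL : (0:ℝ) < lam + 1 := by linarith
  rw [setIntegral_congr_fun measurableSet_Ioc (eqOn_mid n), integral_const_mul]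
  have i1 : IntegrableOn (fun x : ℝ => x^n * Real.exp (-x)) (Ioc 0 a) := intOn_Ioc1 n a
  have i2 : IntegrableOn (fun x : ℝ => x^n * Real.exp (-((lam+1)*x))) (Ioc (0:ℝ) a) := by
    apply Continuous.integrableOn_Ioc; fun_prop
  have i3 : IntegrableOn (fun x : ℝ => lam * (x^(n+1) * Real.exp (-((lam+1)*x)))) (Ioc (0:ℝ) a) := by
    apply Continuous.integrableOn_Ioc; fun_prop
  have i12 : IntegrableOn (fun x : ℝ => x^n * Real.exp (-x)
      - x^n * Real.exp (-((lam+1)*x))) (Ioc (0:ℝ) a) := i1.sub i2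
  rw [integral_add i12 i3, integral_sub i1 i2, integral_const_mul]
  have e1 : ∫ x in Ioc (0:ℝ) a, x^n * Real.exp (-x) = Glow n a := rfl
  rw [e1, scale_Ioc n hL ha.le, scale_Ioc (n+1) hL ha.le]

lemma int_right (n : ℕ) (ha : 0 < a) (hlam : 0 < lam) :
    ∫ x in Ioi a, x^n * Real.exp (-x) * maxUExpPDF a lam x
      = lam * ((((lam+1)^(n+1))⁻¹) * ((n.factorial : ℝ) - Glow n ((lam+1)*a))) := by
  have hL : (0:ℝ) < lam + 1 := by linarith
  rw [setIntegral_congr_fun measurableSet_Ioi (eqOn_right n ha), integral_const_mul,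
    scale_Ioi n hL ha.le]

lemma main_eq (ha : 0 < a) (hlam : 0 < lam) (n : ℕ) :
    mixedPoissonMaxUExpPMF a lam n =
      ∫ x in Ioi (0:ℝ), x^n / (n.factorial : ℝ) * Real.exp (-x) * maxUExpPDF a lam x := by
  have hL : (0:ℝ) < lam + 1 := by linarith
  have hfac : (n.factorial : ℝ) ≠ 0 := Nat.cast_ne_zero.mpr n.factorial_ne_zero
  have hrw : (fun x : ℝ => x^n / (n.factorial : ℝ) * Real.exp (-x) * maxUExpPDF a lam x)
      = fun x : ℝ => (n.factorial : ℝ)⁻¹ * (x^n * Real.exp (-x) * maxUExpPDF a lam x) := by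
    funext x; ring
  rw [hrw, integral_const_mul, ← Ioc_union_Ioi_eq_Ioi ha.le,
    setIntegral_union (Ioc_disjoint_Ioi le_rfl) measurableSet_Ioi (intOn_g_mid n)
      (intOn_g_right n ha hlam),
    int_mid n ha hlam, int_right n ha hlam]
  unfold mixedPoissonMaxUExpPMF
  have hnu : (n:ℝ) * lam * upperIncGamma (n:ℝ) (a*(lam+1))
      = lam * ((n:ℝ) * upperIncGamma (n:ℝ) (a*(lam+1))) := by ring
  rw [lowerIncGamma_eq n a, lowerIncGamma_eq n (a*(lam+1)), hnu, nmul_upper n (by positivity),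
    glow_succ n (by positivity), show a*(lam+1) = (lam+1)*a by ring]
  have hb : ((lam+1)*a)^n = (lam+1)^n * a^n := mul_pow _ _ _
  field_simp
  ring

end main

section norm
variable {a lam : ℝ}

lemma intOn_pdf_mid (ha : 0 < a) : IntegrableOn (maxUExpPDF a lam) (Ioc 0 a) := by
  have hcont : Continuous (fun x : ℝ =>
      (1/a) * (1 - Real.exp (-lam*x) + lam*x*Real.exp (-lam*x))) := by fun_prop
  exact (hcont.integrableOn_Ioc).congr_fun (fun x hx => (pdf_mid hx).symm) measurableSet_Ioc

lemma intOn_pdf_right (ha : 0 < a) (hlam : 0 < lam) :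
    IntegrableOn (maxUExpPDF a lam) (Ioi a) := by
  have h : IntegrableOn (fun x : ℝ => lam * (x^0 * Real.exp (-(lam*x)))) (Ioi a) :=
    (intOn_Ioi' 0 hlam ha.le).const_mul lam
  exact h.congr_fun (fun x hx => by
    rw [pdf_right ha hx]; simp [neg_mul]) measurableSet_Ioi

lemma intOn_pdf (ha : 0 < a) (hlam : 0 < lam) :
    IntegrableOn (maxUExpPDF a lam) (Ioi 0) := by
  rw [← Ioc_union_Ioi_eq_Ioi ha.le]
  exact (intOn_pdf_mid ha).union (intOn_pdf_right ha hlam)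

lemma int_pdf_one (ha : 0 < a) (hlam : 0 < lam) :
    ∫ x in Ioi (0:ℝ), maxUExpPDF a lam x = 1 := by
  rw [← Ioc_union_Ioi_eq_Ioi ha.le,
    setIntegral_union (Ioc_disjoint_Ioi le_rfl) measurableSet_Ioi (intOn_pdf_mid ha)
      (intOn_pdf_right ha hlam)]
  have emid : ∀ x ∈ Ioc (0:ℝ) a, maxUExpPDF a lam x
      = (1/a) * (1 - x^0 * Real.exp (-(lam*x)) + lam * (x^1 * Real.exp (-(lam*x)))) := by
    intro x hx
    rw [pdf_mid hx]
    simp only [pow_zero, pow_one, one_mul, neg_mul]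
    ring
  have eright : ∀ x ∈ Ioi a, maxUExpPDF a lam x
      = lam * (x^0 * Real.exp (-(lam*x))) := by
    intro x hx
    rw [pdf_right ha hx]
    simp [neg_mul]
  rw [setIntegral_congr_fun measurableSet_Ioc emid,
    setIntegral_congr_fun measurableSet_Ioi eright, integral_const_mul, integral_const_mul,
    scale_Ioi 0 hlam ha.le]
  have i1 : IntegrableOn (fun _ : ℝ => (1:ℝ)) (Ioc (0:ℝ) a) := by
    apply Continuous.integrableOn_Ioc; fun_prop
  have i2 : IntegrableOn (fun x : ℝ => x^0 * Real.exp (-(lam*x))) (Ioc (0:ℝ) a) :=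
    intOn_Ioc 0 lam a
  have i3 : IntegrableOn (fun x : ℝ => lam * (x^1 * Real.exp (-(lam*x)))) (Ioc (0:ℝ) a) :=
    (intOn_Ioc 1 lam a).const_mul lam
  have i12 : IntegrableOn (fun x : ℝ => 1 - x^0 * Real.exp (-(lam*x))) (Ioc (0:ℝ) a) :=
    i1.sub i2
  rw [integral_add i12 i3, integral_sub i1 i2, integral_const_mul,
    scale_Ioc 0 hlam ha.le, scale_Ioc 1 hlam ha.le, glow_succ 0 (by positivity),
    glow_zero (by positivity)]
  have hvol : ∫ x in Ioc (0:ℝ) a, (1:ℝ) = a := by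
    simp [Real.volume_Ioc, ENNReal.toReal_ofReal ha.le, ha.le]
  rw [hvol]
  have h1 : Real.exp (-(lam*a)) ≤ 1 := by rw [Real.exp_le_one_iff]; nlinarith
  field_simp
  ring

end norm

section tsum
variable {a lam : ℝ}

lemma pmf_nonneg (ha : 0 < a) (hlam : 0 < lam) (n : ℕ) :
    0 ≤ mixedPoissonMaxUExpPMF a lam n := by
  rw [main_eq ha hlam n]
  apply setIntegral_nonneg measurableSet_Ioi
  intro x hx
  have hp := pdf_nonneg ha hlam x
  have hx0 : (0:ℝ) ≤ x := le_of_lt hx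
  have : (0:ℝ) ≤ x^n / (n.factorial : ℝ) * Real.exp (-x) := by positivity
  exact mul_nonneg this hp

lemma f_meas (n : ℕ) : Measurable
    (fun x : ℝ => x^n / (n.factorial : ℝ) * Real.exp (-x) * maxUExpPDF a lam x) := by
  exact (((measurable_id.pow_const n).div_const _).mul
    (Real.measurable_exp.comp measurable_neg)).mul (pdf_meas a lam)

lemma f_int (ha : 0 < a) (hlam : 0 < lam) (n : ℕ) : IntegrableOn
    (fun x : ℝ => x^n / (n.factorial : ℝ) * Real.exp (-x) * maxUExpPDF a lam x) (Ioi 0) := by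
  have h := (intOn_g_mid (a := a) (lam := lam) n).union (intOn_g_right n ha hlam)
  rw [Ioc_union_Ioi_eq_Ioi ha.le] at h
  have h2 : IntegrableOn (fun x : ℝ =>
      ((n.factorial : ℝ))⁻¹ * (x^n * Real.exp (-x) * maxUExpPDF a lam x)) (Ioi 0) :=
    h.const_mul _
  exact h2.congr_fun (fun x _ => by ring) measurableSet_Ioi

lemma f_nonneg_ae (ha : 0 < a) (hlam : 0 < lam) (n : ℕ) :
    0 ≤ᵐ[volume.restrict (Ioi (0:ℝ))]
      (fun x : ℝ => x^n / (n.factorial : ℝ) * Real.exp (-x) * maxUExpPDF a lam x) := by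
  refine (ae_restrict_iff' measurableSet_Ioi).mpr (Filter.Eventually.of_forall fun x hx => ?_)
  have hp := pdf_nonneg ha hlam x
  have hx0 : (0:ℝ) ≤ x := le_of_lt hx
  have : (0:ℝ) ≤ x^n / (n.factorial : ℝ) * Real.exp (-x) := by positivity
  exact mul_nonneg this hp

lemma tsum_pmf_one (ha : 0 < a) (hlam : 0 < lam) :
    ∑' n : ℕ, mixedPoissonMaxUExpPMF a lam n = 1 := by
  set f : ℕ → ℝ → ℝ :=
    fun n x => x^n / (n.factorial : ℝ) * Real.exp (-x) * maxUExpPDF a lam x with hf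
  have key : ∀ n : ℕ, ENNReal.ofReal (mixedPoissonMaxUExpPMF a lam n)
      = ∫⁻ x in Ioi (0:ℝ), ENNReal.ofReal (f n x) := by
    intro n
    rw [main_eq ha hlam n]
    exact ofReal_integral_eq_lintegral_ofReal (f_int ha hlam n) (f_nonneg_ae ha hlam n)
  have hsum : ∑' n : ℕ, ENNReal.ofReal (mixedPoissonMaxUExpPMF a lam n) = 1 := by
    calc ∑' n : ℕ, ENNReal.ofReal (mixedPoissonMaxUExpPMF a lam n)
        = ∑' n : ℕ, ∫⁻ x in Ioi (0:ℝ), ENNReal.ofReal (f n x) := tsum_congr key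
      _ = ∫⁻ x in Ioi (0:ℝ), ∑' n : ℕ, ENNReal.ofReal (f n x) :=
          (lintegral_tsum (fun n => ((f_meas n).ennreal_ofReal).aemeasurable)).symm
      _ = ∫⁻ x in Ioi (0:ℝ), ENNReal.ofReal (maxUExpPDF a lam x) := by
          apply lintegral_congr_ae
          refine (ae_restrict_iff' measurableSet_Ioi).mpr
            (Filter.Eventually.of_forall fun x hx => ?_)
          have hx0 : (0:ℝ) ≤ x := le_of_lt hx
          have hp := pdf_nonneg ha hlam x
          have hsum2 : HasSum (fun n : ℕ => x^n / (n.factorial : ℝ)) (Real.exp x) := by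
            rw [Real.exp_eq_exp_ℝ]
            exact NormedSpace.expSeries_div_hasSum_exp x
          have hsum3 : HasSum (fun n : ℕ => f n x)
              (Real.exp x * (Real.exp (-x) * maxUExpPDF a lam x)) := by
            have h := hsum2.mul_right (Real.exp (-x) * maxUExpPDF a lam x)
            simpa [hf, mul_assoc] using h
          have hnn : ∀ n : ℕ, 0 ≤ f n x := by
            intro n
            have : (0:ℝ) ≤ x^n / (n.factorial : ℝ) * Real.exp (-x) := by positivity
            exact mul_nonneg this hp
          show ∑' n : ℕ, ENNReal.ofReal (f n x) = ENNReal.ofReal (maxUExpPDF a lam x)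
          rw [← ENNReal.ofReal_tsum_of_nonneg hnn hsum3.summable]
          congr 1
          rw [hsum3.tsum_eq, ← mul_assoc, ← Real.exp_add]
          simp
      _ = 1 := by
          rw [← ofReal_integral_eq_lintegral_ofReal (intOn_pdf ha hlam)
            ((ae_restrict_iff' measurableSet_Ioi).mpr
              (Filter.Eventually.of_forall fun x _ => pdf_nonneg ha hlam x)),
            int_pdf_one ha hlam, ENNReal.ofReal_one]
  have hne : ∀ n : ℕ, ENNReal.ofReal (mixedPoissonMaxUExpPMF a lam n) ≠ ⊤ :=
    fun n => ENNReal.ofReal_ne_top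
  have h2 := ENNReal.tsum_toReal_eq hne
  rw [hsum, ENNReal.toReal_one] at h2
  calc ∑' n : ℕ, mixedPoissonMaxUExpPMF a lam n
      = ∑' n : ℕ, (ENNReal.ofReal (mixedPoissonMaxUExpPMF a lam n)).toReal :=
        tsum_congr (fun n => (ENNReal.toReal_ofReal (pmf_nonneg ha hlam n)).symm)
    _ = 1 := h2.symm

end tsum

theorem mixedPoissonMaxUExp_is_pmf (a lam : ℝ) (ha : 0 < a) (hlam : 0 < lam) :
    (∀ n : ℕ, mixedPoissonMaxUExpPMF a lam n =
      ∫ x in Set.Ioi (0 : ℝ),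
        x ^ n / (n.factorial : ℝ) * Real.exp (-x) * maxUExpPDF a lam x) ∧
    (∀ n : ℕ, 0 ≤ mixedPoissonMaxUExpPMF a lam n) ∧
    (∑' n : ℕ, mixedPoissonMaxUExpPMF a lam n) = 1 :=
  ⟨main_eq ha hlam, pmf_nonneg ha hlam, tsum_pmf_one ha hlam⟩
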